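/- Let F be the distribution function of a probability measure on [0,∞) with F(0)=0, and let Ψ_F be the compounding operator. Then for every measurable locally bounded h : [0,∞) → ℝ, every x ≥ 0 and every n ∈ ℕ, the iterated operator satisfies ‖Ψ_Fⁿ h‖_{[0,x]} ≤ (2ⁿ xⁿ / n!) · ‖h‖_{[0,x]}. -/

import Mathlib

open MeasureTheory Set Filter

/-- The compounding operator `Ψ_F` associated with the probability measure `μ` on `[0,∞)`
(whose distribution function is `F`, so that `F(0) = 0` reads `μ (Iic 0) = 0`):
`(Ψ_F h)(x) = ∫₀ˣ (h(z) - ∫₀ᶻ h(z-y) dF(y)) dz`,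
the inner integral being the Lebesgue–Stieltjes integral with respect to `F`. -/
noncomputable def Psi (μ : Measure ℝ) (h : ℝ → ℝ) : ℝ → ℝ :=
  fun x => ∫ z in (0:ℝ)..x, (h z - ∫ y in Icc (0:ℝ) z, h (z - y) ∂μ)

/-- `h : [0,∞) → ℝ` is locally bounded. -/
def LocBdd (h : ℝ → ℝ) : Prop :=
  ∀ x : ℝ, ∃ M : ℝ, ∀ z ∈ Icc (0:ℝ) x, |h z| ≤ M

/-- `‖h‖_{[0,x]} = sup_{z ∈ [0,x]} |h z|`. -/
noncomputable def supNorm (h : ℝ → ℝ) (x : ℝ) : ℝ :=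
  sSup ((fun z => |h z|) '' Icc (0:ℝ) x)

/-- Key pointwise bound, by induction on `n`. -/
lemma psi_iter_pointwise (μ : Measure ℝ) [IsProbabilityMeasure μ] (h : ℝ → ℝ)
    (x : ℝ) (S : ℝ) (hS0 : 0 ≤ S) (hS : ∀ z ∈ Icc (0:ℝ) x, |h z| ≤ S) :
    ∀ n : ℕ, ∀ w ∈ Icc (0:ℝ) x,
      |(Psi μ)^[n] h w| ≤ 2 ^ n * S / (n.factorial : ℝ) * w ^ n := by
  intro n
  induction n with
  | zero => intro w hw; simpa using hS w hw
  | succ n ih =>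
    intro w hw
    obtain ⟨hw0, hwx⟩ := hw
    set g := (Psi μ)^[n] h with hg
    set C : ℝ := 2 ^ n * S / (n.factorial : ℝ) with hCdef
    have hC0 : 0 ≤ C := by positivity
    set f : ℝ → ℝ := fun z => g z - ∫ y in Icc (0:ℝ) z, g (z - y) ∂μ with hf
    -- pointwise bound on the integrand
    have hpt : ∀ z ∈ Icc (0:ℝ) w, |f z| ≤ 2 * C * z ^ n := by
      intro z hz
      have hzx : z ∈ Icc (0:ℝ) x := ⟨hz.1, hz.2.trans hwx⟩
      have hgz : |g z| ≤ C * z ^ n := ih z hzx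
      have hinner : |∫ y in Icc (0:ℝ) z, g (z - y) ∂μ| ≤ C * z ^ n := by
        have hb : ∀ y ∈ Icc (0:ℝ) z, ‖g (z - y)‖ ≤ C * z ^ n := by
          intro y hy
          have h1 : z - y ∈ Icc (0:ℝ) x :=
            ⟨by linarith [hy.2], by linarith [hy.1, hzx.2]⟩
          have h2 : |g (z - y)| ≤ C * (z - y) ^ n := ih _ h1
          have h3 : (z - y) ^ n ≤ z ^ n :=
            pow_le_pow_left₀ (by linarith [hy.2]) (by linarith [hy.1]) n
          calc ‖g (z - y)‖ = |g (z - y)| := Real.norm_eq_abs _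
            _ ≤ C * (z - y) ^ n := h2
            _ ≤ C * z ^ n := by nlinarith
        have := norm_setIntegral_le_of_norm_le_const
          (measure_lt_top μ _) hb
        calc |∫ y in Icc (0:ℝ) z, g (z - y) ∂μ|
            ≤ C * z ^ n * (μ (Icc (0:ℝ) z)).toReal := this
          _ ≤ C * z ^ n * 1 := by
              apply mul_le_mul_of_nonneg_left _
                (mul_nonneg hC0 (pow_nonneg hz.1 n))
              exact ENNReal.toReal_le_of_le_ofReal zero_le_one
                (by simpa using prob_le_one)
          _ = C * z ^ n := mul_one _
      calc |f z| ≤ |g z| + |∫ y in Icc (0:ℝ) z, g (z - y) ∂μ| := abs_sub _ _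
        _ ≤ C * z ^ n + C * z ^ n := add_le_add hgz hinner
        _ = 2 * C * z ^ n := by ring
    -- the outer integral
    have hmain : |(Psi μ)^[n + 1] h w| ≤ 2 * C * (w ^ (n + 1) / (n + 1)) := by
      rw [Function.iterate_succ_apply', ← hg]
      show |∫ z in (0:ℝ)..w, f z| ≤ _
      by_cases hint : IntervalIntegrable f volume 0 w
      · have hcont : IntervalIntegrable (fun z => 2 * C * z ^ n) volume 0 w :=
          (Continuous.intervalIntegrable (by continuity) _ _)
        have h1 : |∫ z in (0:ℝ)..w, f z| ≤ ∫ z in (0:ℝ)..w, |f z| := by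
          simpa [Real.norm_eq_abs] using
            intervalIntegral.norm_integral_le_integral_norm (f := f) hw0
        have h2 : (∫ z in (0:ℝ)..w, |f z|) ≤ ∫ z in (0:ℝ)..w, 2 * C * z ^ n := by
          apply intervalIntegral.integral_mono_on hw0 hint.abs hcont
          exact hpt
        have h3 : (∫ z in (0:ℝ)..w, 2 * C * z ^ n) = 2 * C * (w ^ (n + 1) / (n + 1)) := by
          rw [intervalIntegral.integral_const_mul, integral_pow]
          norm_num
        linarith
      · rw [intervalIntegral.integral_undef hint]
        rw [abs_zero]
        positivity
    refine hmain.trans ?_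
    rw [hCdef, Nat.factorial_succ]
    have hfac : (n.factorial : ℝ) ≠ 0 := Nat.cast_ne_zero.2 n.factorial_ne_zero
    have hn1 : (n : ℝ) + 1 ≠ 0 := by positivity
    push_cast
    apply le_of_eq
    field_simp
    ring

theorem psi_iter_bound (μ : Measure ℝ) [IsProbabilityMeasure μ] (hμ0 : μ (Iic 0) = 0)
    (h : ℝ → ℝ) (hmeas : Measurable h) (hbdd : LocBdd h)
    (x : ℝ) (hx : 0 ≤ x) (n : ℕ) :
    supNorm ((Psi μ)^[n] h) x ≤ (2 ^ n * x ^ n / (n.factorial : ℝ)) * supNorm h x := by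
  obtain ⟨M, hM⟩ := hbdd x
  have hne : ((fun z => |h z|) '' Icc (0:ℝ) x).Nonempty :=
    ⟨|h 0|, mem_image_of_mem _ (by simp [hx])⟩
  have hbdd' : BddAbove ((fun z => |h z|) '' Icc (0:ℝ) x) := by
    refine ⟨M, ?_⟩
    rintro v ⟨z, hz, rfl⟩
    exact hM z hz
  set S := supNorm h x with hSdef
  have hS : ∀ z ∈ Icc (0:ℝ) x, |h z| ≤ S := fun z hz =>
    le_csSup hbdd' (mem_image_of_mem _ hz)
  have hS0 : 0 ≤ S := le_trans (abs_nonneg _) (hS 0 (by simp [hx]))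
  have key := psi_iter_pointwise μ h x S hS0 hS n
  rw [supNorm]
  apply csSup_le
  · exact ⟨|(Psi μ)^[n] h 0|, mem_image_of_mem _ (by simp [hx])⟩
  · rintro v ⟨w, hw, rfl⟩
    calc |(Psi μ)^[n] h w| ≤ 2 ^ n * S / (n.factorial : ℝ) * w ^ n := key w hw
      _ ≤ 2 ^ n * S / (n.factorial : ℝ) * x ^ n := by
          apply mul_le_mul_of_nonneg_left (pow_le_pow_left₀ hw.1 hw.2 n) (by positivity)
      _ = 2 ^ n * x ^ n / (n.factorial : ℝ) * S := by ring
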